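/- Let ε > 0 and let η, φ : ℝ → ℝ be C¹ with η φ having compact support and η satisfying ε²η'' + (1 − x² − η²)η = 0. Then ∫_ℝ ε²((ηφ)')² dx = ∫_ℝ [ε²η²(φ')² + ε²(η')² + η²(1 − x² − η²)(φ² − 1)] dx. -/

import Mathlib

open MeasureTheory Set Filter

set_option maxHeartbeats 1000000 in
theorem gp_tail (ε : ℝ) (hε : 0 < ε) (η : ℝ → ℝ) (hη : ContDiff ℝ 2 η)
    (hode : ∀ x : ℝ, ε^2 * deriv (deriv η) x + (1 - x^2 - (η x)^2) * η x = 0) (a : ℝ) (ha : 1 ≤ a) :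
    Tendsto (fun x => η x * deriv η x) atTop (nhds 0) ∧
    IntegrableOn (fun x => ε^2 * (deriv η x)^2 + (x^2 - 1 + (η x)^2) * (η x)^2) (Set.Ioi a) := by
  have hε2 : (0:ℝ) < ε^2 := by positivity
  have hεne : ε ≠ 0 := ne_of_gt hε
  have hdη : Differentiable ℝ η := hη.differentiable (by norm_num)
  have hη1 : ContDiff ℝ 1 (deriv η) := ((contDiff_succ_iff_deriv (n := 1)).mp (by exact_mod_cast hη)).2.2
  have hdη' : Differentiable ℝ (deriv η) := hη1.differentiable one_ne_zero
  have hode' : ∀ x, deriv (deriv η) x = (x^2 - 1 + (η x)^2) * η x / ε^2 := by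
    intro x
    have h := hode x
    field_simp
    linarith
  set m : ℝ → ℝ := fun x => η x * deriv η x with hm_def
  set m' : ℝ → ℝ := fun x => (deriv η x)^2 + (x^2 - 1 + (η x)^2) * (η x)^2 / ε^2 with hm'_def
  set u : ℝ → ℝ := fun x => (η x)^2 with hu_def
  have hm_eq : ∀ x, m x = η x * deriv η x := fun _ => rfl
  have hm'_eq : ∀ x, m' x = (deriv η x)^2 + (x^2 - 1 + (η x)^2) * (η x)^2 / ε^2 := fun _ => rfl
  have hu_eq : ∀ x, u x = (η x)^2 := fun _ => rfl
  clear_value m m' u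
  have hm : ∀ x, HasDerivAt m (m' x) x := by
    intro x
    have h1 : HasDerivAt η (deriv η x) x := (hdη x).hasDerivAt
    have h2 : HasDerivAt (deriv η) (deriv (deriv η) x) x := (hdη' x).hasDerivAt
    have h3 := h1.mul h2
    have h4 : m' x = deriv η x * deriv η x + η x * deriv (deriv η) x := by
      rw [hm'_eq, hode' x]
      field_simp
    rw [funext hm_eq, h4]
    exact h3
  have hu : ∀ x, HasDerivAt u (2 * m x) x := by
    intro x
    have h1 : HasDerivAt η (deriv η x) x := (hdη x).hasDerivAt
    have h2 := h1.pow 2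
    have h3 : 2 * m x = 2 * η x ^ (2-1) * deriv η x := by rw [hm_eq]; ring
    rw [funext hu_eq, h3]
    exact h2
  have hcm : Continuous m := by rw [funext hm_eq]; exact (hdη.continuous).mul (hη1.continuous)
  have hcu : Continuous u := by rw [funext hu_eq]; exact (hdη.continuous).pow 2
  have hcm' : Continuous m' := by
    rw [funext hm'_eq]
    apply Continuous.add
    · exact (hη1.continuous).pow 2
    · exact ((((continuous_id.pow 2).sub continuous_const).add
        ((hdη.continuous).pow 2)).mul ((hdη.continuous).pow 2)).div_const _
  have hu_nonneg : ∀ x, 0 ≤ u x := fun x => by rw [hu_eq]; positivity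
  have hm'_nonneg : ∀ x : ℝ, 1 ≤ x → 0 ≤ m' x := by
    intro x hx
    rw [hm'_eq]
    have h1 : 0 ≤ x^2 - 1 + (η x)^2 := by nlinarith [sq_nonneg (η x)]
    have h2 : 0 ≤ (x^2 - 1 + (η x)^2) * (η x)^2 / ε^2 := by positivity
    have h3 := sq_nonneg (deriv η x)
    linarith
  have hm'_lower : ∀ x : ℝ, 1 ≤ x → (u x)^2 / ε^2 ≤ m' x := by
    intro x hx
    rw [hm'_eq, hu_eq]
    have hx2 : 0 ≤ x^2 - 1 := by nlinarith
    have h1 : ((η x)^2)^2 ≤ (x^2 - 1 + (η x)^2) * (η x)^2 := by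
      nlinarith [mul_nonneg hx2 (sq_nonneg (η x))]
    have h2 : ((η x)^2)^2 / ε^2 ≤ (x^2 - 1 + (η x)^2) * (η x)^2 / ε^2 := by gcongr
    have h3 := sq_nonneg (deriv η x)
    linarith
  have hmono : MonotoneOn m (Set.Ici (1:ℝ)) := by
    apply monotoneOn_of_deriv_nonneg (convex_Ici 1) hcm.continuousOn
    · intro x _
      exact (hm x).differentiableAt.differentiableWithinAt
    · intro x hx
      rw [(hm x).deriv]
      rw [interior_Ici] at hx
      exact hm'_nonneg x (le_of_lt hx)
  -- key claim: m ≤ 0 on [1, ∞)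
  have key : ∀ x : ℝ, 1 ≤ x → m x ≤ 0 := by
    intro x0 hx0
    by_contra hpos
    push_neg at hpos
    have hu0 : 0 < u x0 := by
      have hne : η x0 ≠ 0 := by
        intro h
        rw [hm_eq, h, zero_mul] at hpos
        exact lt_irrefl 0 hpos
      rw [hu_eq]
      positivity
    set δ : ℝ := m x0 with hδ_def
    set A : ℝ := 3 * ε^2 with hA_def
    have hA : 0 < A := by rw [hA_def]; positivity
    set s : ℝ := 1 + A / u x0 + A / δ with hs_def
    have hs1 : 1 ≤ s := by
      have h1 : 0 ≤ A / u x0 := by positivity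
      have h2 : 0 ≤ A / δ := by positivity
      rw [hs_def]; linarith
    have hs0 : 0 < s := lt_of_lt_of_le one_pos hs1
    set T : ℝ := x0 + s with hT_def
    have hx0T : x0 < T := by rw [hT_def]; linarith
    clear_value δ A s T
    set p : ℝ → ℝ := fun x => A / (T - x)^2 with hp_def
    set p' : ℝ → ℝ := fun x => 2 * A / (T - x)^3 with hp'_def
    set p'' : ℝ → ℝ := fun x => 6 * A / (T - x)^4 with hp''_def
    have hp_eq : ∀ x, p x = A / (T - x)^2 := fun _ => rfl
    have hp'_eq : ∀ x, p' x = 2 * A / (T - x)^3 := fun _ => rfl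
    have hp''_eq : ∀ x, p'' x = 6 * A / (T - x)^4 := fun _ => rfl
    clear_value p p' p''
    have hTsub : ∀ x : ℝ, x < T → (0:ℝ) < T - x := fun x hx => by linarith
    have hlin : ∀ x : ℝ, HasDerivAt (fun y => T - y) (-1) x := by
      intro x
      simpa using (hasDerivAt_id' x).const_sub T
    have hp : ∀ x : ℝ, x < T → HasDerivAt p (p' x) x := by
      intro x hx
      have hne : (T - x)^2 ≠ 0 := pow_ne_zero _ (ne_of_gt (hTsub x hx))
      have h2 : HasDerivAt (fun y => (T - y)^2) (2 * (T - x)^(2-1) * (-1)) x := (hlin x).pow 2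
      have h3 := (hasDerivAt_const x A).div h2 hne
      have h4 : p' x = (0 * (T - x)^2 - A * (2 * (T - x)^(2-1) * (-1))) / ((T - x)^2)^2 := by
        rw [hp'_eq]
        have hw0 : T - x ≠ 0 := ne_of_gt (hTsub x hx)
        generalize (T - x) = w at hw0 ⊢
        field_simp
        ring
      rw [funext hp_eq, h4]
      exact h3
    have hp' : ∀ x : ℝ, x < T → HasDerivAt p' (p'' x) x := by
      intro x hx
      have hne : (T - x)^3 ≠ 0 := pow_ne_zero _ (ne_of_gt (hTsub x hx))
      have h2 : HasDerivAt (fun y => (T - y)^3) (3 * (T - x)^(3-1) * (-1)) x := (hlin x).pow 3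
      have h3 := (hasDerivAt_const x (2 * A)).div h2 hne
      have h4 : p'' x = (0 * (T - x)^3 - 2 * A * (3 * (T - x)^(3-1) * (-1))) / ((T - x)^3)^2 := by
        rw [hp''_eq]
        have hw0 : T - x ≠ 0 := ne_of_gt (hTsub x hx)
        generalize (T - x) = w at hw0 ⊢
        field_simp
        ring
      rw [funext hp'_eq, h4]
      exact h3
    have hcp : ∀ x : ℝ, x < T → ContinuousAt p x := fun x hx => (hp x hx).continuousAt
    have hcp' : ∀ x : ℝ, x < T → ContinuousAt p' x := fun x hx => (hp' x hx).continuousAt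
    have hTx0 : T - x0 = s := by rw [hT_def]; ring
    have hppos : ∀ x, x < T → 0 < p x := by
      intro x hx
      rw [hp_eq]
      exact div_pos hA (pow_pos (hTsub x hx) 2)
    have hpx0 : p x0 < u x0 := by
      have h1 : p x0 = A / s^2 := by rw [hp_eq, hTx0]
      have h2 : A / s^2 ≤ A / s := by
        apply div_le_div_of_nonneg_left hA.le hs0
        nlinarith
      have h3 : A / s < u x0 := by
        rw [div_lt_iff₀ hs0]
        have hc : u x0 * (A / u x0) = A := by field_simp
        have h4 : 0 ≤ A / δ := by positivity
        nlinarith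
      linarith
    have hp'x0 : p' x0 < 2 * δ := by
      have h1 : p' x0 = 2 * A / s^3 := by rw [hp'_eq, hTx0]
      have h2 : 2 * A / s^3 ≤ 2 * A / s := by
        apply div_le_div_of_nonneg_left (by linarith) hs0
        nlinarith [mul_nonneg (mul_nonneg hs0.le (by linarith : (0:ℝ) ≤ s - 1)) (by linarith : (0:ℝ) ≤ s + 1)]
      have h3 : A / s < δ := by
        rw [div_lt_iff₀ hs0]
        have hc : δ * (A / δ) = A := by field_simp
        have h4 : 0 ≤ A / u x0 := by positivity
        nlinarith
      have h5 : 2 * A / s = 2 * (A / s) := by ring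
      linarith
    -- comparison: u dominates p on [x0, T)
    have grow : ∀ y, x0 ≤ y → y < T → p y < u y := by
      intro y hy hyT
      by_contra hle
      push_neg at hle
      set S : Set ℝ := Set.Icc x0 y ∩ (fun x => u x - p x) ⁻¹' Set.Iic 0 with hS_def
      have hmemS : ∀ z, z ∈ S ↔ (z ∈ Set.Icc x0 y ∧ u z - p z ≤ 0) := fun z => Iff.rfl
      clear_value S
      have hSne : S.Nonempty := ⟨y, (hmemS y).mpr ⟨⟨hy, le_rfl⟩, by linarith⟩⟩
      have hScl : IsClosed S := by
        have hgc : ContinuousOn (fun x => u x - p x) (Set.Icc x0 y) := by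
          apply ContinuousOn.sub hcu.continuousOn
          intro x hx
          exact (hcp x (lt_of_le_of_lt hx.2 hyT)).continuousWithinAt
        rw [hS_def]
        exact hgc.preimage_isClosed_of_isClosed isClosed_Icc isClosed_Iic
      have hbdd : BddBelow S := ⟨x0, fun x hx => (((hmemS x).mp hx).1).1⟩
      set x3 := sInf S with hx3_def
      clear_value x3
      have hx3S : x3 ∈ S := hx3_def ▸ hScl.csInf_mem hSne hbdd
      have hx3le : u x3 - p x3 ≤ 0 := ((hmemS x3).mp hx3S).2
      have hx3mem : x3 ∈ Set.Icc x0 y := ((hmemS x3).mp hx3S).1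
      have hx3T : x3 < T := lt_of_le_of_lt hx3mem.2 hyT
      have hgx0 : 0 < u x0 - p x0 := by linarith
      have hx0x3 : x0 < x3 := by
        rcases lt_or_eq_of_le hx3mem.1 with h | h
        · exact h
        · exfalso; rw [← h] at hx3le; linarith
      have hbefore : ∀ x, x0 ≤ x → x < x3 → 0 < u x - p x := by
        intro x h1 h2
        by_contra h
        push_neg at h
        have hxS : x ∈ S := (hmemS x).mpr ⟨⟨h1, le_trans h2.le hx3mem.2⟩, h⟩
        exact absurd (hx3_def ▸ csInf_le hbdd hxS) (not_le.mpr h2)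
      have hg'mono : MonotoneOn (fun x => 2 * m x - p' x) (Set.Icc x0 x3) := by
        apply monotoneOn_of_deriv_nonneg (convex_Icc _ _)
        · apply ContinuousOn.sub (continuous_const.mul hcm).continuousOn
          intro x hx
          exact (hcp' x (lt_of_le_of_lt hx.2 hx3T)).continuousWithinAt
        · intro x hx
          rw [interior_Icc] at hx
          exact (((hm x).const_mul 2).sub (hp' x (lt_trans hx.2 hx3T))).differentiableAt.differentiableWithinAt
        · intro x hx
          rw [interior_Icc] at hx
          have hxT : x < T := lt_trans hx.2 hx3T
          rw [HasDerivAt.deriv (f := fun x => 2 * m x - p' x) (((hm x).const_mul 2).sub (hp' x hxT))]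
          have hx1 : (1:ℝ) ≤ x := le_trans hx0 hx.1.le
          have h1 : 0 < u x - p x := hbefore x hx.1.le hx.2
          have h2 : 0 < p x := hppos x hxT
          have h4 : (u x)^2 / ε^2 ≤ m' x := hm'_lower x hx1
          have e1 : p'' x = 2 / ε^2 * (p x)^2 := by
            rw [hp''_eq, hp_eq, hA_def]
            have hne : (T - x) ≠ 0 := ne_of_gt (hTsub x hxT)
            field_simp
            ring
          have e2 : (p x)^2 ≤ (u x)^2 := by nlinarith [h1, h2, hu_nonneg x]
          have h5 : 2 / ε^2 * (p x)^2 ≤ 2 / ε^2 * (u x)^2 := by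
            apply mul_le_mul_of_nonneg_left e2 (by positivity)
          have h6 : 2 / ε^2 * (u x)^2 = 2 * ((u x)^2 / ε^2) := by ring
          linarith
      have hg'x0 : 0 < 2 * m x0 - p' x0 := by rw [← hδ_def]; linarith
      have hgsm : StrictMonoOn (fun x => u x - p x) (Set.Icc x0 x3) := by
        apply strictMonoOn_of_deriv_pos (convex_Icc _ _)
        · apply ContinuousOn.sub hcu.continuousOn
          intro x hx
          exact (hcp x (lt_of_le_of_lt hx.2 hx3T)).continuousWithinAt
        · intro x hx
          rw [interior_Icc] at hx
          have hxT : x < T := lt_trans hx.2 hx3T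
          rw [HasDerivAt.deriv (f := fun x => u x - p x) ((hu x).sub (hp x hxT))]
          have := hg'mono ⟨le_rfl, hx0x3.le⟩ ⟨hx.1.le, hx.2.le⟩ hx.1.le
          simp only at this
          linarith
      have hfin := hgsm ⟨le_rfl, hx0x3.le⟩ ⟨hx0x3.le, le_rfl⟩ hx0x3
      simp only at hfin
      linarith
    -- boundedness contradiction
    obtain ⟨M, hM⟩ := isCompact_Icc.exists_bound_of_continuousOn (s := Set.Icc x0 T) hcu.continuousOn
    have hM0 : 0 ≤ M := le_trans (norm_nonneg _) (hM x0 ⟨le_rfl, hx0T.le⟩)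
    set r := min s (Real.sqrt (A / (M + 1))) with hr_def
    have hrle : r ≤ Real.sqrt (A / (M + 1)) := min_le_right _ _
    have hrs : r ≤ s := min_le_left _ _
    have hsq : 0 < A / (M + 1) := by positivity
    have hr0 : 0 < r := lt_min hs0 (Real.sqrt_pos.mpr hsq)
    clear_value r
    have hy1 : x0 ≤ T - r := by rw [hT_def]; linarith
    have hy2 : T - r < T := by linarith
    have hgy := grow (T - r) hy1 hy2
    have hpy : p (T - r) = A / r^2 := by
      rw [hp_eq, show T - (T - r) = r from by ring]
    have hr2 : r^2 ≤ A / (M + 1) := by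
      nlinarith [Real.sq_sqrt hsq.le, Real.sqrt_nonneg (A / (M + 1))]
    have hple : M + 1 ≤ A / r^2 := by
      rw [le_div_iff₀ (by positivity)]
      have := (le_div_iff₀ (by linarith : (0:ℝ) < M + 1)).mp hr2
      linarith
    have huy : u (T - r) ≤ M := by
      have := hM (T - r) ⟨hy1, hy2.le⟩
      have h2 := le_abs_self (u (T - r))
      rw [Real.norm_eq_abs] at this
      linarith
    linarith
  -- limit of m at +infinity is 0
  have hbddN : ∀ x : ℝ, m (max x 1) ≤ 0 := fun x => key _ (le_max_right _ _)
  have hNmono : Monotone (fun x => m (max x 1)) := by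
    intro x y hxy
    exact hmono (le_max_right x 1) (le_max_right y 1) (max_le_max hxy le_rfl)
  have hbdd : BddAbove (Set.range (fun x => m (max x 1))) := by
    refine ⟨0, ?_⟩
    rintro z ⟨x, rfl⟩
    exact hbddN x
  have htendN : Tendsto (fun x => m (max x 1)) atTop (nhds (⨆ x, m (max x 1))) :=
    tendsto_atTop_ciSup hNmono hbdd
  set L := ⨆ x : ℝ, m (max x 1) with hL_def
  clear_value L
  have hLle : L ≤ 0 := by rw [hL_def]; exact ciSup_le hbddN
  have hmN : (fun x => m (max x 1)) =ᶠ[atTop] m := by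
    filter_upwards [eventually_ge_atTop (1:ℝ)] with x hx
    rw [max_eq_left hx]
  have htendm : Tendsto m atTop (nhds L) := htendN.congr' hmN
  have hL0 : L = 0 := by
    by_contra hne
    have hL : L < 0 := lt_of_le_of_ne hLle hne
    have hub : ∀ x : ℝ, 1 ≤ x → m x ≤ L := by
      intro x hx
      have h1 : m (max x 1) ≤ L := by rw [hL_def]; exact le_ciSup hbdd x
      rwa [max_eq_left hx] at h1
    have hw : ∀ x : ℝ, HasDerivAt (fun y => u y - 2 * L * y) (2 * m x - 2 * L * 1) x := by
      intro x
      exact (hu x).sub ((hasDerivAt_id x).const_mul (2 * L))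
    have hanti : AntitoneOn (fun y => u y - 2 * L * y) (Set.Ici (1:ℝ)) := by
      apply antitoneOn_of_deriv_nonpos (convex_Ici 1)
      · exact (hcu.sub (continuous_const.mul continuous_id)).continuousOn
      · intro x _
        exact (hw x).differentiableAt.differentiableWithinAt
      · intro x hx
        rw [interior_Ici] at hx
        rw [(hw x).deriv]
        have := hub x hx.le
        linarith
    have h2L : (0:ℝ) < -(2 * L) := by linarith
    set x1 : ℝ := 1 + (u 1 + 1) / (-(2 * L)) with hx1_def
    have hx1pos : 0 < (u 1 + 1) / (-(2 * L)) := div_pos (by linarith [hu_nonneg 1]) h2L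
    have hx1ge : 1 ≤ x1 := by rw [hx1_def]; linarith
    have hkey : 2 * L * (x1 - 1) = -(u 1 + 1) := by
      rw [hx1_def]
      have : (2 * L) ≠ 0 := by linarith
      field_simp
      ring
    have := hanti Set.self_mem_Ici hx1ge hx1ge
    simp only at this
    have h3 := hu_nonneg x1
    linarith
  rw [hL0] at htendm
  refine ⟨htendm, ?_⟩
  have hInt : IntegrableOn (fun x => ε^2 * m' x) (Set.Ioi a) := by
    apply integrableOn_Ioi_deriv_of_nonneg' (g := fun x => ε^2 * m x) (l := ε^2 * 0)
    · intro x _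
      exact (hm x).const_mul _
    · intro x hx
      have h1 : 0 ≤ m' x := hm'_nonneg x (le_trans ha (le_of_lt hx))
      exact mul_nonneg hε2.le h1
    · exact htendm.const_mul (ε^2)
  have heq : (fun x => ε^2 * (deriv η x)^2 + (x^2 - 1 + (η x)^2) * (η x)^2)
      = fun x => ε^2 * m' x := by
    funext x
    rw [hm'_eq]
    field_simp
  rw [heq]
  exact hInt

set_option maxHeartbeats 1000000 in
theorem stmt_8 (ε : ℝ) (hε : 0 < ε) (η φ : ℝ → ℝ)
    (hη : ContDiff ℝ 2 η) (hφ : ContDiff ℝ 1 φ)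
    (hsupp : HasCompactSupport (fun x => η x * φ x))
    (hode : ∀ x : ℝ, ε^2 * deriv (deriv η) x + (1 - x^2 - (η x)^2) * η x = 0) :
    ∫ x : ℝ, ε^2 * (deriv (fun y => η y * φ y) x)^2
      = ∫ x : ℝ, (ε^2 * (η x)^2 * (deriv φ x)^2 + ε^2 * (deriv η x)^2
          + (η x)^2 * (1 - x^2 - (η x)^2) * ((φ x)^2 - 1)) := by
  have hε2 : (0:ℝ) < ε^2 := by positivity
  have hεne : ε ≠ 0 := ne_of_gt hε
  have hdη : Differentiable ℝ η := hη.differentiable (by norm_num)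
  have hη1 : ContDiff ℝ 1 (deriv η) := ((contDiff_succ_iff_deriv (n := 1)).mp (by exact_mod_cast hη)).2.2
  have hdη' : Differentiable ℝ (deriv η) := hη1.differentiable one_ne_zero
  have hdφ : Differentiable ℝ φ := hφ.differentiable one_ne_zero
  have hcφ' : Continuous (deriv φ) := hφ.continuous_deriv le_rfl
  have hηφ : ContDiff ℝ 1 (fun y => η y * φ y) := (hη.of_le (by norm_num)).mul hφ
  have hdηφ : ∀ x, HasDerivAt (fun y => η y * φ y) (deriv η x * φ x + η x * deriv φ x) x :=
    fun x => ((hdη x).hasDerivAt.mul (hdφ x).hasDerivAt)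
  have hderiv_ηφ : ∀ x, deriv (fun y => η y * φ y) x = deriv η x * φ x + η x * deriv φ x :=
    fun x => (hdηφ x).deriv
  -- support radius
  obtain ⟨R, hR⟩ : ∃ R : ℝ, tsupport (fun x => η x * φ x) ⊆ Set.Icc (-R) R := by
    obtain ⟨R, hR⟩ := hsupp.isBounded.subset_closedBall 0
    refine ⟨R, ?_⟩
    rwa [Real.closedBall_eq_Icc, zero_sub, zero_add] at hR
  set a : ℝ := max R 1 with ha_def
  have ha1 : (1:ℝ) ≤ a := le_max_right _ _
  have haR : R ≤ a := le_max_left _ _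
  have hout : ∀ x : ℝ, a < |x| → x ∉ tsupport (fun y => η y * φ y) := by
    intro x hx hmem
    have h1 := hR hmem
    rw [Set.mem_Icc] at h1
    have h2 : |x| ≤ R := abs_le.mpr h1
    linarith
  -- integrands
  set A : ℝ → ℝ := fun x => ε^2 * (deriv (fun y => η y * φ y) x)^2 with hA_def
  set B : ℝ → ℝ := fun x => ε^2 * (η x)^2 * (deriv φ x)^2 + ε^2 * (deriv η x)^2
      + (η x)^2 * (1 - x^2 - (η x)^2) * ((φ x)^2 - 1) with hB_def
  have hA_eq : ∀ x, A x = ε^2 * (deriv (fun y => η y * φ y) x)^2 := fun _ => rfl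
  have hB_eq : ∀ x, B x = ε^2 * (η x)^2 * (deriv φ x)^2 + ε^2 * (deriv η x)^2
      + (η x)^2 * (1 - x^2 - (η x)^2) * ((φ x)^2 - 1) := fun _ => rfl
  set B0 : ℝ → ℝ := fun x => ε^2 * (deriv η x)^2 + (x^2 - 1 + (η x)^2) * (η x)^2 with hB0_def
  have hB0_eq : ∀ x, B0 x = ε^2 * (deriv η x)^2 + (x^2 - 1 + (η x)^2) * (η x)^2 := fun _ => rfl
  set h : ℝ → ℝ := fun x => ε^2 * (η x * deriv η x) * ((φ x)^2 - 1) with hh_def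
  have hh_eq : ∀ x, h x = ε^2 * (η x * deriv η x) * ((φ x)^2 - 1) := fun _ => rfl
  -- h' = A - B
  have hh : ∀ x, HasDerivAt h (A x - B x) x := by
    intro x
    have h1 : HasDerivAt (fun y => η y * deriv η y) (deriv η x * deriv η x + η x * deriv (deriv η) x) x :=
      (hdη x).hasDerivAt.mul (hdη' x).hasDerivAt
    have h2 : HasDerivAt (fun y => (φ y)^2 - 1) (2 * φ x * deriv φ x) x := by
      simpa using ((hdφ x).hasDerivAt.pow 2).sub_const 1
    have h3 := (h1.const_mul (ε^2)).mul h2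
    have h4 : A x - B x = (ε^2 * (deriv η x * deriv η x + η x * deriv (deriv η) x)) * ((φ x)^2 - 1)
        + (ε^2 * (η x * deriv η x)) * (2 * φ x * deriv φ x) := by
      rw [hA_eq, hB_eq, hderiv_ηφ x]
      linear_combination (-(η x) * ((φ x)^2 - 1)) * hode x
    rw [funext hh_eq, h4]
    exact h3
  -- A is integrable
  have hcA : Continuous A := continuous_const.mul ((hηφ.continuous_deriv le_rfl).pow 2)
  have hsuppA : HasCompactSupport A := by
    have h1 : HasCompactSupport (deriv (fun y => η y * φ y)) := hsupp.deriv
    have h2 : HasCompactSupport ((fun t : ℝ => ε^2 * t^2) ∘ (deriv (fun y => η y * φ y))) :=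
      h1.comp_left (by simp)
    exact h2
  have hIA : Integrable A := hcA.integrable_of_hasCompactSupport hsuppA
  -- behavior outside the support
  have hBeq : ∀ x : ℝ, x ∉ tsupport (fun y => η y * φ y) →
      B x = B0 x ∧ A x = 0 ∧ h x = -(ε^2 * (η x * deriv η x)) := by
    intro x hx
    have hop : ∀ᶠ y in nhds x, η y * φ y = 0 := by
      have h1 : (tsupport (fun y => η y * φ y))ᶜ ∈ nhds x :=
        (isClosed_tsupport _).isOpen_compl.mem_nhds hx
      filter_upwards [h1] with y hy
      exact image_eq_zero_of_notMem_tsupport (f := fun z => η z * φ z) hy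
    have e2 : η x * φ x = 0 := hop.self_of_nhds
    have hd0 : deriv (fun y => η y * φ y) x = 0 := by
      have h1 : deriv (fun y => η y * φ y) x = deriv (fun _ : ℝ => (0:ℝ)) x :=
        Filter.EventuallyEq.deriv_eq hop
      rw [h1, deriv_const]
    have hsum : deriv η x * φ x + η x * deriv φ x = 0 := by rw [← hderiv_ηφ x, hd0]
    have hsq : (η x)^2 * deriv φ x = 0 := by
      have : (η x)^2 * deriv φ x = η x * (deriv η x * φ x + η x * deriv φ x)
          - deriv η x * (η x * φ x) := by ring
      rw [this, hsum, e2]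
      ring
    have e1 : η x * deriv φ x = 0 := by
      rcases mul_eq_zero.mp hsq with h1 | h1
      · rw [pow_eq_zero_iff (by norm_num)] at h1
        rw [h1, zero_mul]
      · rw [h1, mul_zero]
    refine ⟨?_, ?_, ?_⟩
    · rw [hB_eq, hB0_eq]
      linear_combination (ε^2 * (η x * deriv φ x)) * e1
        + ((1 - x^2 - (η x)^2) * (η x * φ x)) * e2
    · rw [hA_eq, hd0]
      ring
    · rw [hh_eq]
      linear_combination (ε^2 * deriv η x * φ x) * e2
  -- right tail of m, used for the limit at +∞ and integrability on (a, ∞)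
  obtain ⟨htendtop, hinttop⟩ := gp_tail ε hε η hη hode a ha1
  -- reflected function for the left tail
  have hηr : ContDiff ℝ 2 (fun x => η (-x)) := hη.comp (contDiff_id.neg)
  have hdr : ∀ x : ℝ, deriv (fun y => η (-y)) x = -deriv η (-x) := fun x => deriv_comp_neg η x
  have hdr2 : ∀ x : ℝ, deriv (deriv (fun y => η (-y))) x = deriv (deriv η) (-x) := by
    intro x
    have h1 : deriv (fun y => η (-y)) = fun y => -deriv η (-y) := funext fun y => hdr y
    rw [h1, deriv.fun_neg, deriv_comp_neg (deriv η) x, neg_neg]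
  have hoder : ∀ x : ℝ, ε^2 * deriv (deriv (fun y => η (-y))) x
      + (1 - x^2 - ((η (-x)))^2) * (η (-x)) = 0 := by
    intro x
    rw [hdr2 x]
    linear_combination hode (-x)
  obtain ⟨htendr, hintr⟩ := gp_tail ε hε (fun x => η (-x)) hηr hoder a ha1
  -- limit of m at -∞
  have htendbot : Tendsto (fun x => η x * deriv η x) atBot (nhds 0) := by
    have h1 : Tendsto (fun x => η (-x) * deriv η (-x)) atTop (nhds (0:ℝ)) := by
      have h2 := htendr.neg
      rw [neg_zero] at h2
      apply h2.congr
      intro x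
      rw [hdr x]
      ring
    have h3 := h1.comp tendsto_neg_atBot_atTop
    apply h3.congr
    intro x
    simp
  -- integrability of B
  have hcB : Continuous B := by
    rw [hB_def]
    apply Continuous.add
    apply Continuous.add
    · exact (continuous_const.mul ((hdη.continuous).pow 2)).mul (hcφ'.pow 2)
    · exact continuous_const.mul ((hη1.continuous).pow 2)
    · exact (((hdη.continuous).pow 2).mul ((continuous_const.sub (continuous_id.pow 2)).sub
        ((hdη.continuous).pow 2))).mul (((hdφ.continuous).pow 2).sub continuous_const)
  have hIBIcc : IntegrableOn B (Set.Icc (-a) a) := hcB.integrableOn_Icc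
  have hIBIoi : IntegrableOn B (Set.Ioi a) := by
    apply hinttop.congr_fun ?_ measurableSet_Ioi
    intro x hx
    have hx' : a < x := hx
    have h1 := (hBeq x (hout x (by rw [abs_of_pos (by linarith)]; exact hx'))).1
    beta_reduce
    rw [← hB0_eq, ← h1]
  have hIBIio : IntegrableOn B (Set.Iio (-a)) := by
    have h1 : IntegrableOn (fun x => B0 (-x)) (Set.Ioi a) := by
      apply hintr.congr_fun ?_ measurableSet_Ioi
      intro x _
      beta_reduce
      rw [hB0_eq, hdr x]
      ring
    have hpre : Neg.neg ⁻¹' (Set.Iio (-a)) = Set.Ioi a := by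
      ext x
      simp only [Set.mem_preimage, Set.mem_Iio, Set.mem_Ioi]
      constructor <;> intro <;> linarith
    have h2 : IntegrableOn (B0 ∘ Neg.neg) (Neg.neg ⁻¹' (Set.Iio (-a))) := by
      rw [hpre]
      exact h1
    have h3 : IntegrableOn B0 (Set.Iio (-a)) :=
      ((Measure.measurePreserving_neg _).integrableOn_comp_preimage
        (Homeomorph.neg ℝ).measurableEmbedding).mp h2
    apply h3.congr_fun ?_ measurableSet_Iio
    intro x hx
    have hx' : x < -a := hx
    exact ((hBeq x (hout x (by rw [abs_of_neg (by linarith)]; linarith))).1).symm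
  have hIB : Integrable B := by
    have hcover : Set.Iio (-a) ∪ (Set.Icc (-a) a ∪ Set.Ioi a) = Set.univ := by
      ext x
      simp only [Set.mem_union, Set.mem_Iio, Set.mem_Icc, Set.mem_Ioi, Set.mem_univ, iff_true]
      by_cases h1 : x < -a
      · exact Or.inl h1
      by_cases h2 : x ≤ a
      · exact Or.inr (Or.inl ⟨le_of_not_gt h1, h2⟩)
      · exact Or.inr (Or.inr (lt_of_not_ge h2))
    rw [← integrableOn_univ, ← hcover]
    exact hIBIio.union (hIBIcc.union hIBIoi)
  -- limits of h at both infinities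
  have hhtop : Tendsto h atTop (nhds 0) := by
    have h1 : h =ᶠ[atTop] (fun x => -(ε^2 * (η x * deriv η x))) := by
      filter_upwards [eventually_gt_atTop a] with x hx
      exact (hBeq x (hout x (by rw [abs_of_pos (by linarith)]; exact hx))).2.2
    have h2 : Tendsto (fun x => -(ε^2 * (η x * deriv η x))) atTop (nhds (0:ℝ)) := by
      have h3 := (htendtop.const_mul (ε^2)).neg
      simpa using h3
    exact h2.congr' h1.symm
  have hhbot : Tendsto h atBot (nhds 0) := by
    have h1 : h =ᶠ[atBot] (fun x => -(ε^2 * (η x * deriv η x))) := by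
      filter_upwards [eventually_lt_atBot (-a)] with x hx
      exact (hBeq x (hout x (by rw [abs_of_neg (by linarith)]; linarith))).2.2
    have h2 : Tendsto (fun x => -(ε^2 * (η x * deriv η x))) atBot (nhds (0:ℝ)) := by
      have h3 := (htendbot.const_mul (ε^2)).neg
      simpa using h3
    exact h2.congr' h1.symm
  -- conclusion
  have hIAB : Integrable (fun x => A x - B x) := hIA.sub hIB
  have hzero : ∫ x : ℝ, (A x - B x) = 0 := by
    have h1 := integral_of_hasDerivAt_of_tendsto hh hIAB hhbot hhtop
    simpa using h1
  have hsub := integral_sub hIA hIB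
  have hfin : ∫ x : ℝ, A x = ∫ x : ℝ, B x := by
    have h2 : (∫ x : ℝ, A x) - (∫ x : ℝ, B x) = 0 := by rw [← hsub]; exact hzero
    linarith
  exact hfin
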